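/- Let R be a commutative ring, S a multiplicatively closed subset, I an S-n-ideal of R, and J an ideal of R with J ∩ S ≠ ∅. Then the product IJ and the intersection I ∩ J are S-n-ideals of R. -/

import Mathlib

/-- `I` is an `S`-`n`-ideal: `I` is disjoint from `S` and there is `s ∈ S` such that
whenever `a * b ∈ I` and `s * a` is not nilpotent, then `s * b ∈ I`. -/
def IsSnIdeal {R : Type*} [CommRing R] (S : Set R) (I : Ideal R) : Prop :=
  Disjoint S (I : Set R) ∧
    ∃ s ∈ S, ∀ a b : R, a * b ∈ I → s * a ∉ nilradical R → s * b ∈ I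

/-- `I` is an `n`-ideal: `I` is proper and `a * b ∈ I` with `a` not nilpotent implies `b ∈ I`. -/
def IsNIdeal {R : Type*} [CommRing R] (I : Ideal R) : Prop :=
  I ≠ ⊤ ∧ ∀ a b : R, a * b ∈ I → a ∉ nilradical R → b ∈ I

/-- `I` is an `S`-prime ideal. -/
def IsSPrime {R : Type*} [CommRing R] (S : Set R) (I : Ideal R) : Prop :=
  Disjoint S (I : Set R) ∧
    ∃ s ∈ S, ∀ a b : R, a * b ∈ I → s * a ∈ I ∨ s * b ∈ I
theorem stmt_13 {R : Type*} [CommRing R] (S : Submonoid R) (I J : Ideal R)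
    (hI : IsSnIdeal (S : Set R) I) (hJ : ((J : Set R) ∩ (S : Set R)).Nonempty) :
    IsSnIdeal (S : Set R) (I * J) ∧ IsSnIdeal (S : Set R) (I ⊓ J) := by
  obtain ⟨hdisj, s, hs, hsI⟩ := hI
  obtain ⟨t, htJ, htS⟩ := hJ
  have hdisj' : ∀ (K : Ideal R), (K : Set R) ⊆ (I : Set R) →
      Disjoint (S : Set R) (K : Set R) := fun K hK =>
    Set.disjoint_of_subset_right hK hdisj
  have hstS : s * t ∈ S := S.mul_mem hs htS
  have key : ∀ a b : R, a * b ∈ I → (s * t) * a ∉ nilradical R → s * b ∈ I := by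
    intro a b hab hna
    apply hsI a b hab
    intro hsa
    apply hna
    have : (s * t) * a = t * (s * a) := by ring
    rw [this]
    exact Commute.all t (s*a) |>.isNilpotent_mul_left hsa
  constructor
  · refine ⟨hdisj' _ (fun x hx => Ideal.mul_le_left (I := I) (J := J) hx), s * t, hstS, ?_⟩
    · intro a b hab hna
      have hsb : s * b ∈ I := key a b (Ideal.mul_le_left hab) hna
      have : (s * t) * b = (s * b) * t := by ring
      rw [this]
      exact Ideal.mul_mem_mul hsb htJ
  · refine ⟨hdisj' _ (fun x hx => hx.1), s * t, hstS, ?_⟩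
    intro a b hab hna
    have hsb : s * b ∈ I := key a b hab.1 hna
    constructor
    · have : (s * t) * b = t * (s * b) := by ring
      rw [this]; exact I.mul_mem_left t hsb
    · have : (s * t) * b = (s * b) * t := by ring
      rw [this]; exact J.mul_mem_left _ htJ
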